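/- The map F defined by (F f)(λ) := √(2/(1 + λ²)) · f(2·arctan λ) for λ ∈ ℝ is an isometric linear bijection from L²((−π, π), ℂ) onto L²(ℝ, ℂ); in particular, for every f ∈ L²((−π, π), ℂ) one has ∫_ℝ (2/(1 + λ²)) |f(2 arctan λ)|² dλ = ∫_{−π}^{π} |f(θ)|² dθ. -/

import Mathlib

open MeasureTheory

namespace CayleyAux

open Real Set
open scoped ENNReal NNReal

noncomputable def phi (l : ℝ) : ℝ := 2 * Real.arctan l
noncomputable def psi (θ : ℝ) : ℝ := Real.tan (θ / 2)
noncomputable def rho (l : ℝ) : ℝ := Real.sqrt (2 / (1 + l ^ 2))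
noncomputable def sig (θ : ℝ) : ℝ := Real.sqrt ((1 + psi θ ^ 2) / 2)
noncomputable def w (l : ℝ) : ℝ≥0∞ := ENNReal.ofReal (2 / (1 + l ^ 2))
noncomputable def μ : Measure ℝ := volume.restrict (Set.Ioo (-π) π)

lemma denom_pos (l : ℝ) : (0:ℝ) < 1 + l ^ 2 := by positivity
lemma frac_pos (l : ℝ) : (0:ℝ) < 2 / (1 + l ^ 2) := by positivity
lemma rho_pos (l : ℝ) : 0 < rho l := Real.sqrt_pos.2 (frac_pos l)

lemma measurable_phi : Measurable phi := measurable_arctan.const_mul 2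

lemma measurable_tan' : Measurable Real.tan := by
  have : Real.tan = fun x => Real.sin x / Real.cos x := funext Real.tan_eq_sin_div_cos
  rw [this]; exact Real.measurable_sin.div Real.measurable_cos

lemma measurable_psi : Measurable psi :=
  measurable_tan'.comp (measurable_id.div_const 2)

lemma psi_phi (l : ℝ) : psi (phi l) = l := by
  unfold psi phi
  rw [mul_div_cancel_left₀ _ (two_ne_zero), Real.tan_arctan]

lemma phi_psi {θ : ℝ} (hθ : θ ∈ Set.Ioo (-π) π) : phi (psi θ) = θ := by
  unfold phi psi
  rw [Real.arctan_tan (by linarith [hθ.1]) (by linarith [hθ.2])]; ring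

lemma range_phi : Set.range phi = Set.Ioo (-π) π := by
  ext θ
  constructor
  · rintro ⟨l, rfl⟩
    have h1 := Real.neg_pi_div_two_lt_arctan l
    have h2 := Real.arctan_lt_pi_div_two l
    unfold phi
    constructor <;> [linarith; linarith]
  · intro hθ; exact ⟨psi θ, phi_psi hθ⟩

lemma hasDerivAt_phi (l : ℝ) : HasDerivAt phi (2 / (1 + l ^ 2)) l := by
  have h := (Real.hasDerivAt_arctan l).const_mul (2:ℝ)
  rw [mul_one_div] at h
  exact h

lemma injective_phi : Function.Injective phi := by
  intro a b h
  exact Real.arctan_injective (mul_left_cancel₀ two_ne_zero h)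

lemma measurable_w : Measurable w := by
  apply Measurable.ennreal_ofReal
  exact measurable_const.div ((measurable_id.pow_const 2).const_add 1)

lemma map_phi : Measure.map phi (volume.withDensity w) = μ := by
  have h := map_withDensity_abs_det_fderiv_eq_addHaar (volume : Measure ℝ) MeasurableSet.univ.nullMeasurableSet
    (f' := fun l => (1 : ℝ →L[ℝ] ℝ).smulRight (2 / (1 + l ^ 2)))
    (fun x _ => ((hasDerivAt_phi x).hasDerivWithinAt).hasFDerivWithinAt)
    injective_phi.injOn
  rw [Measure.restrict_univ, Set.image_univ, range_phi] at h
  unfold μ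
  rw [← h]
  have hw : w = fun x : ℝ =>
      ENNReal.ofReal |((fun l : ℝ => (1 : ℝ →L[ℝ] ℝ).smulRight (2 / (1 + l ^ 2))) x).det| := by
    funext l
    rw [ContinuousLinearMap.det_smulRight, ContinuousLinearMap.one_apply, one_mul, abs_of_pos (frac_pos l)]
    rfl
  rw [hw]

lemma map_psi : Measure.map psi μ = volume.withDensity w := by
  rw [← map_phi, Measure.map_map measurable_psi measurable_phi]
  have h : psi ∘ phi = id := funext psi_phi
  rw [h, Measure.map_id]

lemma volume_ac : (volume : Measure ℝ) ≪ volume.withDensity w := by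
  refine Measure.AbsolutelyContinuous.mk fun s hs h0 => ?_
  rw [withDensity_apply_eq_zero measurable_w] at h0
  have huniv : {x | w x ≠ 0} = Set.univ :=
    Set.eq_univ_of_forall fun x => (ENNReal.ofReal_pos.2 (frac_pos x)).ne'
  rw [huniv, Set.univ_inter] at h0
  exact h0

lemma qpp_phi : Measure.QuasiMeasurePreserving phi (volume : Measure ℝ) μ := by
  refine ⟨measurable_phi, Measure.AbsolutelyContinuous.mk fun s hs h0 => ?_⟩
  have h1 : (Measure.map phi (volume.withDensity w)) s = 0 := by rw [map_phi]; exact h0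
  rw [Measure.map_apply measurable_phi hs] at h1
  rw [Measure.map_apply measurable_phi hs]
  exact volume_ac h1

lemma qpp_psi : Measure.QuasiMeasurePreserving psi μ (volume : Measure ℝ) :=
  ⟨measurable_psi, by rw [map_psi]; exact withDensity_absolutelyContinuous _ _⟩

lemma lintegral_key {G : ℝ → ℝ≥0∞} (hG : Measurable G) :
    ∫⁻ l, w l * G (phi l) = ∫⁻ θ, G θ ∂μ := by
  have hGphi : Measurable fun a : ℝ => G (phi a) := hG.comp measurable_phi
  rw [← map_phi, lintegral_map hG measurable_phi,
    lintegral_withDensity_eq_lintegral_mul _ measurable_w hGphi]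
  rfl

lemma lintegral_key2 {G : ℝ → ℝ≥0∞} (hG : Measurable G) :
    ∫⁻ θ, ENNReal.ofReal ((1 + psi θ ^ 2) / 2) * G (psi θ) ∂μ = ∫⁻ l, G l := by
  have hH : Measurable fun l : ℝ => ENNReal.ofReal ((1 + l ^ 2) / 2) * G l := by
    refine Measurable.mul ?_ hG
    exact Measurable.ennreal_ofReal (((measurable_id.pow_const 2).const_add 1).div_const 2)
  calc ∫⁻ θ, ENNReal.ofReal ((1 + psi θ ^ 2) / 2) * G (psi θ) ∂μ
      = ∫⁻ θ, (fun l => ENNReal.ofReal ((1 + l ^ 2) / 2) * G l) (psi θ) ∂μ := rfl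
    _ = ∫⁻ l, ENNReal.ofReal ((1 + l ^ 2) / 2) * G l ∂(Measure.map psi μ) :=
        (lintegral_map hH measurable_psi).symm
    _ = ∫⁻ l, w l * (ENNReal.ofReal ((1 + l ^ 2) / 2) * G l) := by
        rw [map_psi, lintegral_withDensity_eq_lintegral_mul _ measurable_w hH]; rfl
    _ = ∫⁻ l, G l := by
        congr 1
        funext l
        rw [← mul_assoc]
        unfold w
        rw [← ENNReal.ofReal_mul (le_of_lt (frac_pos l))]
        have : (2 / (1 + l ^ 2)) * ((1 + l ^ 2) / 2) = 1 := by
          field_simp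
        rw [this, ENNReal.ofReal_one, one_mul]

lemma nnnorm_rho_mul (l : ℝ) (z : ℂ) :
    (‖((rho l : ℝ) : ℂ) * z‖₊ : ℝ≥0∞) ^ (2:ℝ) = w l * (‖z‖₊ : ℝ≥0∞) ^ (2:ℝ) := by
  rw [nnnorm_mul, ENNReal.coe_mul, ENNReal.mul_rpow_of_nonneg _ _ (by norm_num)]
  congr 1
  have h2 : rho l ^ (2:ℝ) = 2 / (1 + l ^ 2) := by
    unfold rho
    rw [show (2:ℝ) = ((2:ℕ):ℝ) by norm_num, Real.rpow_natCast,
      Real.sq_sqrt (by positivity)]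
  rw [Complex.nnnorm_real, ← enorm_eq_nnnorm, Real.enorm_eq_ofReal (rho_pos l).le,
    ENNReal.ofReal_rpow_of_nonneg (rho_pos l).le (by norm_num), h2]
  rfl

lemma nnnorm_sig_mul (θ : ℝ) (z : ℂ) :
    (‖((sig θ : ℝ) : ℂ) * z‖₊ : ℝ≥0∞) ^ (2:ℝ) =
      ENNReal.ofReal ((1 + psi θ ^ 2) / 2) * (‖z‖₊ : ℝ≥0∞) ^ (2:ℝ) := by
  rw [nnnorm_mul, ENNReal.coe_mul, ENNReal.mul_rpow_of_nonneg _ _ (by norm_num)]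
  congr 1
  have h2 : sig θ ^ (2:ℝ) = (1 + psi θ ^ 2) / 2 := by
    unfold sig
    rw [show (2:ℝ) = ((2:ℕ):ℝ) by norm_num, Real.rpow_natCast,
      Real.sq_sqrt (by positivity)]
  have hsig : (0:ℝ) ≤ sig θ := Real.sqrt_nonneg _
  rw [Complex.nnnorm_real, ← enorm_eq_nnnorm, Real.enorm_eq_ofReal hsig,
    ENNReal.ofReal_rpow_of_nonneg hsig (by norm_num), h2]

lemma sig_rho (l : ℝ) : rho l * sig (phi l) = 1 := by
  unfold sig
  rw [psi_phi]
  unfold rho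
  rw [← Real.sqrt_mul (le_of_lt (frac_pos l)),
    show (2 / (1 + l ^ 2)) * ((1 + l ^ 2) / 2) = 1 by field_simp, Real.sqrt_one]

lemma sig_rho' (θ : ℝ) : sig θ * rho (psi θ) = 1 := by
  unfold sig rho
  rw [← Real.sqrt_mul (by positivity),
    show ((1 + psi θ ^ 2) / 2) * (2 / (1 + psi θ ^ 2)) = 1 by
      field_simp, Real.sqrt_one]

noncomputable def Tfun (f : ℝ → ℂ) : ℝ → ℂ := fun l => ((rho l : ℝ) : ℂ) * f (phi l)
noncomputable def Sfun (g : ℝ → ℂ) : ℝ → ℂ := fun θ => ((sig θ : ℝ) : ℂ) * g (psi θ)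

lemma two_toReal : (2 : ℝ≥0∞).toReal = (2:ℝ) := by norm_num

lemma eLpNorm_T {f : ℝ → ℂ} (hf : AEStronglyMeasurable f μ) :
    AEStronglyMeasurable (Tfun f) (volume : Measure ℝ) ∧
      eLpNorm (Tfun f) 2 volume = eLpNorm f 2 μ := by
  set f₀ : ℝ → ℂ := hf.mk f with hf₀def
  have hf₀ : StronglyMeasurable f₀ := hf.stronglyMeasurable_mk
  have heq : f =ᵐ[μ] f₀ := hf.ae_eq_mk
  have hcomp : (f ∘ phi) =ᵐ[volume] (f₀ ∘ phi) := qpp_phi.ae_eq_comp heq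
  have hgg : Tfun f =ᵐ[volume] Tfun f₀ := by
    filter_upwards [hcomp] with l hl
    simp only [Function.comp_apply] at hl
    simp only [Tfun, hl]
  have hT₀ : StronglyMeasurable (Tfun f₀) := by
    apply StronglyMeasurable.mul
    · exact (Complex.continuous_ofReal.comp (Real.continuous_sqrt.comp
        (by fun_prop (disch := intro x; positivity) : Continuous fun l : ℝ =>
          2 / (1 + l ^ 2)))).stronglyMeasurable
    · exact hf₀.comp_measurable measurable_phi
  have hmeas : AEStronglyMeasurable (Tfun f) (volume : Measure ℝ) :=
    hT₀.aestronglyMeasurable.congr hgg.symm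
  refine ⟨hmeas, ?_⟩
  rw [eLpNorm_congr_ae hgg, eLpNorm_congr_ae heq,
    eLpNorm_eq_lintegral_rpow_enorm_toReal two_ne_zero ENNReal.ofNat_ne_top,
    eLpNorm_eq_lintegral_rpow_enorm_toReal two_ne_zero ENNReal.ofNat_ne_top, two_toReal]
  congr 1
  have hG : Measurable fun θ : ℝ => (‖f₀ θ‖₊ : ℝ≥0∞) ^ (2:ℝ) :=
    hf₀.measurable.enorm.pow_const _
  calc ∫⁻ l, (‖Tfun f₀ l‖₊ : ℝ≥0∞) ^ (2:ℝ)
      = ∫⁻ l, w l * (‖f₀ (phi l)‖₊ : ℝ≥0∞) ^ (2:ℝ) := by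
        congr 1; funext l; exact nnnorm_rho_mul l (f₀ (phi l))
    _ = ∫⁻ θ, (‖f₀ θ‖₊ : ℝ≥0∞) ^ (2:ℝ) ∂μ := lintegral_key hG

lemma eLpNorm_S {g : ℝ → ℂ} (hg : AEStronglyMeasurable g (volume : Measure ℝ)) :
    AEStronglyMeasurable (Sfun g) μ ∧ eLpNorm (Sfun g) 2 μ = eLpNorm g 2 volume := by
  set g₀ : ℝ → ℂ := hg.mk g with hg₀def
  have hg₀ : StronglyMeasurable g₀ := hg.stronglyMeasurable_mk
  have heq : g =ᵐ[volume] g₀ := hg.ae_eq_mk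
  have hcomp : (g ∘ psi) =ᵐ[μ] (g₀ ∘ psi) := qpp_psi.ae_eq_comp heq
  have hgg : Sfun g =ᵐ[μ] Sfun g₀ := by
    filter_upwards [hcomp] with θ hθ
    simp only [Function.comp_apply] at hθ
    simp only [Sfun, hθ]
  have hS₀ : StronglyMeasurable (Sfun g₀) := by
    apply StronglyMeasurable.mul
    · refine (Complex.measurable_ofReal.comp ?_).stronglyMeasurable
      exact Real.continuous_sqrt.measurable.comp
        (((measurable_psi.pow_const 2).const_add 1).div_const 2)
    · exact hg₀.comp_measurable measurable_psi
  have hmeas : AEStronglyMeasurable (Sfun g) μ := hS₀.aestronglyMeasurable.congr hgg.symm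
  refine ⟨hmeas, ?_⟩
  rw [eLpNorm_congr_ae hgg, eLpNorm_congr_ae heq,
    eLpNorm_eq_lintegral_rpow_enorm_toReal two_ne_zero ENNReal.ofNat_ne_top,
    eLpNorm_eq_lintegral_rpow_enorm_toReal two_ne_zero ENNReal.ofNat_ne_top, two_toReal]
  congr 1
  have hG : Measurable fun l : ℝ => (‖g₀ l‖₊ : ℝ≥0∞) ^ (2:ℝ) :=
    hg₀.measurable.enorm.pow_const _
  calc ∫⁻ θ, (‖Sfun g₀ θ‖₊ : ℝ≥0∞) ^ (2:ℝ) ∂μ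
      = ∫⁻ θ, ENNReal.ofReal ((1 + psi θ ^ 2) / 2) * (‖g₀ (psi θ)‖₊ : ℝ≥0∞) ^ (2:ℝ) ∂μ := by
        apply lintegral_congr; intro θ; exact nnnorm_sig_mul θ (g₀ (psi θ))
    _ = ∫⁻ l, (‖g₀ l‖₊ : ℝ≥0∞) ^ (2:ℝ) := lintegral_key2 hG

lemma memT (f : Lp ℂ 2 μ) : MemLp (Tfun ⇑f) 2 (volume : Measure ℝ) :=
  ⟨(eLpNorm_T (Lp.aestronglyMeasurable f)).1,
    by rw [(eLpNorm_T (Lp.aestronglyMeasurable f)).2]; exact Lp.eLpNorm_lt_top f⟩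

lemma memS (g : Lp ℂ 2 (volume : Measure ℝ)) : MemLp (Sfun ⇑g) 2 μ :=
  ⟨(eLpNorm_S (Lp.aestronglyMeasurable g)).1,
    by rw [(eLpNorm_S (Lp.aestronglyMeasurable g)).2]; exact Lp.eLpNorm_lt_top g⟩

noncomputable def T : Lp ℂ 2 μ →ₗᵢ[ℂ] Lp ℂ 2 (volume : Measure ℝ) where
  toFun f := (memT f).toLp _
  map_add' f g := by
    rw [← MemLp.toLp_add (memT f) (memT g)]
    apply MemLp.toLp_congr
    have h1 := qpp_phi.ae_eq_comp (Lp.coeFn_add f g)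
    filter_upwards [h1] with l hl
    simp only [Function.comp_apply, Pi.add_apply] at hl
    simp only [Tfun, Pi.add_apply, hl]
    ring
  map_smul' c f := by
    simp only [RingHom.id_apply]
    rw [← MemLp.toLp_const_smul c (memT f)]
    apply MemLp.toLp_congr
    have h1 := qpp_phi.ae_eq_comp (Lp.coeFn_smul c f)
    filter_upwards [h1] with l hl
    simp only [Function.comp_apply, Pi.smul_apply] at hl
    simp only [Tfun, Pi.smul_apply, hl, smul_eq_mul]
    ring
  norm_map' f := by
    show ‖(memT f).toLp (Tfun ⇑f)‖ = ‖f‖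
    rw [Lp.norm_toLp, (eLpNorm_T (Lp.aestronglyMeasurable f)).2, Lp.norm_def]

lemma T_surj : Function.Surjective T := by
  intro g
  refine ⟨(memS g).toLp _, ?_⟩
  apply Lp.ext
  have h0 : (T ((memS g).toLp (Sfun ⇑g)) : ℝ → ℂ) =ᵐ[volume]
      Tfun ⇑((memS g).toLp (Sfun ⇑g)) := MemLp.coeFn_toLp (memT _)
  have h1 : ⇑((memS g).toLp (Sfun ⇑g)) =ᵐ[μ] Sfun ⇑g := MemLp.coeFn_toLp _
  have h2 := qpp_phi.ae_eq_comp h1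
  refine h0.trans ?_
  filter_upwards [h2] with l hl
  simp only [Function.comp_apply] at hl
  simp only [Tfun, hl, Sfun, psi_phi]
  rw [← mul_assoc, ← Complex.ofReal_mul, sig_rho, Complex.ofReal_one, one_mul]

end CayleyAux

open CayleyAux

/-- the isometry `F` of Appendix C.  The map
`(F f)(λ) := √(2/(1 + λ²)) · f(2 arctan λ)` is an isometric linear bijection from
`L²((-π, π), ℂ)` onto `L²(ℝ, ℂ)`; in particular, for every `f ∈ L²((-π, π), ℂ)`,
`∫_ℝ (2/(1 + λ²)) |f(2 arctan λ)|² dλ = ∫_{-π}^{π} |f(θ)|² dθ`. -/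
theorem cayley_substitution_isometry :
    ∃ F : Lp ℂ 2 (volume.restrict (Set.Ioo (-Real.pi) Real.pi)) ≃ₗᵢ[ℂ]
        Lp ℂ 2 (volume : MeasureTheory.Measure ℝ),
      (∀ f : Lp ℂ 2 (volume.restrict (Set.Ioo (-Real.pi) Real.pi)),
        (F f : ℝ → ℂ) =ᵐ[volume]
          fun l : ℝ => ((Real.sqrt (2 / (1 + l ^ 2)) : ℝ) : ℂ) *
            (f : ℝ → ℂ) (2 * Real.arctan l)) ∧
      ∀ f : Lp ℂ 2 (volume.restrict (Set.Ioo (-Real.pi) Real.pi)),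
        ∫ l : ℝ, (2 / (1 + l ^ 2)) * ‖(f : ℝ → ℂ) (2 * Real.arctan l)‖ ^ 2 =
          ∫ θ in Set.Ioo (-Real.pi) Real.pi, ‖(f : ℝ → ℂ) θ‖ ^ 2 := by
  refine ⟨LinearIsometryEquiv.ofSurjective T T_surj, fun f => ?_, fun f => ?_⟩
  · have h0 : (T f : ℝ → ℂ) =ᵐ[volume] Tfun ⇑f := MemLp.coeFn_toLp (memT f)
    exact h0.trans (Filter.Eventually.of_forall fun l => rfl)
  · have h := integral_image_eq_integral_abs_deriv_smul (f := phi)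
      (f' := fun x => 2 / (1 + x ^ 2)) MeasurableSet.univ
      (fun x _ => (hasDerivAt_phi x).hasDerivWithinAt)
      injective_phi.injOn (fun θ => ‖(f : ℝ → ℂ) θ‖ ^ 2)
    rw [Set.image_univ, range_phi, setIntegral_univ] at h
    rw [h]
    apply integral_congr_ae
    apply Filter.Eventually.of_forall
    intro l
    simp only [smul_eq_mul, abs_of_pos (frac_pos l), phi]
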